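/- (Upper bound for entropy.) Suppose h : [0,∞) → [0,∞] satisfies h(t) ≥ (n+m)²/(C²+(n+m)t) for all t ≥ 0, where C > 0. Then ((n+m)/2)log(2πe) + (1/2)∫₀^∞[(n+m)/(1+t) − h(t)]dt ≤ ((n+m)/2)·log((2πe/(n+m))·C²). In particular, χ*(X⊔Y : (B_ℓ,B_r)) ≤ ((n+m)/2)·log((2πe/(n+m))·C²) where C² = φ(∑Xᵢ² + ∑Yⱼ²). -/

import Mathlib

open MeasureTheory Set Real

/-- Upper bound for the non-microstate bi-free entropy.  If the Fisher
information along the semicircular flow satisfies the Cramer–Rao bound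
`h(t) ≥ (n+m)²/(C²+(n+m)t)`, then
`((n+m)/2)log(2πe) + (1/2)∫₀^∞[(n+m)/(1+t) − h(t)]dt
  ≤ ((n+m)/2)·log((2πe/(n+m))·C²)`.
In particular `χ*(X⊔Y : (B_ℓ,B_r)) ≤ ((n+m)/2)·log((2πe/(n+m))·C²)` with
`C² = φ(∑Xᵢ² + ∑Yⱼ²)`. -/
theorem stmt12 (n m : ℕ) (C : ℝ) (hC : 0 < C) (h : ℝ → ℝ)
    (hlow : ∀ t ≥ (0:ℝ), ((n+m : ℝ))^2 / (C^2 + (n+m) * t) ≤ h t)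
    (hint : IntegrableOn (fun t => (n+m : ℝ)/(1+t) - h t) (Ioi 0)) :
    (n+m : ℝ)/2 * Real.log (2 * π * Real.exp 1)
        + (1/2) * ∫ t in Ioi (0:ℝ), ((n+m : ℝ)/(1+t) - h t)
      ≤ (n+m : ℝ)/2 * Real.log ((2 * π * Real.exp 1 / (n+m)) * C^2) := by
  set N : ℝ := (n+m : ℝ) with hNdef
  have hN0 : 0 ≤ N := by positivity
  rcases eq_or_lt_of_le hN0 with hN | hN
  · -- degenerate case N = 0
    have hI : ∫ t in Ioi (0:ℝ), (N/(1+t) - h t) ≤ 0 := by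
      apply setIntegral_nonpos measurableSet_Ioi
      intro x hx
      have hl := hlow x (le_of_lt hx)
      rw [← hN] at hl
      have hh : 0 ≤ h x := by simpa using hl
      rw [← hN]
      simp
      linarith
    rw [← hN] at hI ⊢
    linarith
  · -- main case N > 0
    set a : ℝ := C^2 / N with ha
    have haa : 0 < a := by positivity
    set g : ℝ → ℝ := fun x => N/(1+x) - N/(x+a) with hg
    set F : ℝ → ℝ := fun x => N * (Real.log (1+x) - Real.log (x+a)) with hF
    have hderiv : ∀ x ∈ Ici (0:ℝ), HasDerivAt F (g x) x := by
      intro x hx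
      have hx0 : (0:ℝ) ≤ x := hx
      have h1 : (0:ℝ) < 1 + x := by linarith
      have h2 : (0:ℝ) < x + a := by linarith
      have d1 : HasDerivAt (fun x : ℝ => Real.log (1+x)) (1/(1+x)) x := by
        have : HasDerivAt (fun x : ℝ => 1 + x) 1 x := (hasDerivAt_id x).const_add 1
        simpa using this.log h1.ne'
      have d2 : HasDerivAt (fun x : ℝ => Real.log (x+a)) (1/(x+a)) x := by
        have : HasDerivAt (fun x : ℝ => x + a) 1 x := (hasDerivAt_id x).add_const a
        simpa using this.log h2.ne'
      have := ((d1.sub d2).const_mul N)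
      refine this.congr_deriv ?_
      simp only [hg]
      ring
    have htend : Filter.Tendsto F Filter.atTop (nhds 0) := by
      have h0 : Filter.Tendsto (fun x : ℝ => 1 + (1-a)/(x+a)) Filter.atTop (nhds 1) := by
        have : Filter.Tendsto (fun x : ℝ => (1-a)/(x+a)) Filter.atTop (nhds 0) :=
          Filter.Tendsto.div_atTop tendsto_const_nhds
            (Filter.tendsto_atTop_add_const_right _ a Filter.tendsto_id)
        simpa using (this.const_add 1)
      have hlog : Filter.Tendsto (fun x : ℝ => Real.log (1 + (1-a)/(x+a)))
          Filter.atTop (nhds 0) := by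
        have := (Real.continuousAt_log (x := 1) one_ne_zero).tendsto.comp h0
        simpa [Function.comp_def] using this
      have := hlog.const_mul N
      rw [mul_zero] at this
      apply this.congr'
      filter_upwards [Filter.eventually_gt_atTop (0:ℝ)] with x hx
      have h1 : (0:ℝ) < 1 + x := by linarith
      have h2 : (0:ℝ) < x + a := by linarith
      have : 1 + (1-a)/(x+a) = (1+x)/(x+a) := by field_simp; ring
      rw [hF, this, Real.log_div h1.ne' h2.ne']
    have hgint : IntegrableOn g (Ioi 0) := by
      rcases le_or_gt 1 a with hcase | hcase
      · apply integrableOn_Ioi_deriv_of_nonneg' hderiv _ htend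
        intro x hx
        have hx0 : (0:ℝ) < x := hx
        have h1 : (0:ℝ) < 1 + x := by linarith
        have h2 : (0:ℝ) < x + a := by linarith
        have : N/(x+a) ≤ N/(1+x) := by
          apply div_le_div_of_nonneg_left hN.le h1; linarith
        simpa [hg] using sub_nonneg.2 this
      · apply integrableOn_Ioi_deriv_of_nonpos' hderiv _ htend
        intro x hx
        have hx0 : (0:ℝ) < x := hx
        have h1 : (0:ℝ) < 1 + x := by linarith
        have h2 : (0:ℝ) < x + a := by linarith
        have : N/(1+x) ≤ N/(x+a) := by
          apply div_le_div_of_nonneg_left hN.le h2; linarith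
        simpa [hg] using sub_nonpos.2 this
    have hval : ∫ x in Ioi (0:ℝ), g x = N * Real.log a := by
      rw [integral_Ioi_of_hasDerivAt_of_tendsto' hderiv hgint htend]
      simp [hF]
    have hmono : ∫ t in Ioi (0:ℝ), (N/(1+t) - h t) ≤ ∫ x in Ioi (0:ℝ), g x := by
      apply setIntegral_mono_on hint hgint measurableSet_Ioi
      intro x hx
      have hx0 : (0:ℝ) ≤ x := le_of_lt hx
      have hl := hlow x hx0
      have heq : N/(x+a) = N^2 / (C^2 + N * x) := by
        rw [ha]; field_simp; ring
      have : N/(x+a) ≤ h x := by rw [heq]; exact hl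
      simp only [hg]
      linarith
    have hI : ∫ t in Ioi (0:ℝ), (N/(1+t) - h t) ≤ N * Real.log a := hval ▸ hmono
    have hrhs : Real.log ((2 * π * Real.exp 1 / N) * C^2)
        = Real.log (2 * π * Real.exp 1) + Real.log a := by
      have h2pe : (0:ℝ) < 2 * π * Real.exp 1 := by positivity
      rw [← Real.log_mul h2pe.ne' haa.ne']
      congr 1
      rw [ha]; field_simp
    rw [hrhs]
    have hh : (0:ℝ) < N := hN
    nlinarith [hI]
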